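/- Let σ be the field automorphism of F_q given by σ(a) = a^r for all a ∈ F_q, where r > 1 is a power of the characteristic of F_q and r < q. If gcd((q^{n+1}−1)/(q−1), r−1) > 1, then there exists an invertible (n+1)×(n+1) matrix M over F_q such that θ_M = 0, i.e. no nonzero row vector ξ ∈ F_q^{n+1} satisfies ξ·M = λ·ξ^σ for any λ ∈ F_q. -/

import Mathlib

open Matrix Polynomial

theorem stmt_15_aux (F : Type) [Field F] [Fintype F] (p s : ℕ) [Fact p.Prime]
    [CharP F p] (hs : s ≠ 0) :
    ∃ (K : Type) (_i1 : Field K) (_i2 : Fintype K) (_i3 : Algebra F K),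
      Fintype.card K = Fintype.card F ^ s := by
  classical
  obtain ⟨m, hpm, hFm⟩ := FiniteField.card F p
  have hq2 : 1 < Fintype.card F := Fintype.one_lt_card
  have hQpow : Fintype.card F ^ s = p ^ ((m : ℕ) * s) := by rw [hFm, ← pow_mul]
  have hmn0 : (m : ℕ) * s ≠ 0 := by
    have := m.pos
    positivity
  haveI hfin : Finite (SplittingField (X ^ (p ^ ((m : ℕ) * s)) - X : F[X])) :=
    Module.finite_of_finite F
  haveI hft : Fintype (SplittingField (X ^ (p ^ ((m : ℕ) * s)) - X : F[X])) :=
    Fintype.ofFinite _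
  refine ⟨SplittingField (X ^ (p ^ ((m : ℕ) * s)) - X : F[X]), inferInstance, hft,
    inferInstance, ?_⟩
  set K := SplittingField (X ^ (p ^ ((m : ℕ) * s)) - X : F[X]) with hKdef
  haveI : CharP K p := charP_of_injective_algebraMap (algebraMap F K).injective p
  have hxQ : ∀ x : K, x ^ (p ^ ((m : ℕ) * s)) = x := by
    intro x
    have hmem : x ∈ (⊤ : Subalgebra F K) := trivial
    rw [← Polynomial.SplittingField.adjoin_rootSet
      (X ^ (p ^ ((m : ℕ) * s)) - X : F[X])] at hmem
    induction hmem using Algebra.adjoin_induction with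
    | mem y hy =>
        rw [mem_rootSet] at hy
        have h2 := hy.2
        rw [map_sub, map_pow, aeval_X] at h2
        exact sub_eq_zero.mp h2
    | algebraMap a =>
        rw [← map_pow]
        congr 1
        have h3 : a ^ (Fintype.card F ^ s) = a := FiniteField.pow_card_pow s a
        rwa [hQpow] at h3
    | add x y hx hy ihx ihy =>
        rw [add_pow_char_pow, ihx, ihy]
    | mul x y hx hy ihx ihy =>
        rw [mul_pow, ihx, ihy]
  have hgpne : (X ^ (p ^ ((m : ℕ) * s)) - X : F[X]) ≠ 0 :=
    FiniteField.X_pow_card_pow_sub_X_ne_zero F hmn0 (Fact.out : p.Prime).one_lt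
  have hsep : (X ^ (p ^ ((m : ℕ) * s)) - X : F[X]).Separable :=
    galois_poly_separable p _ (dvd_pow_self p hmn0)
  have hcardroot :
      Fintype.card ((X ^ (p ^ ((m : ℕ) * s)) - X : F[X]).rootSet K) = p ^ ((m : ℕ) * s) := by
    have h1 := card_rootSet_eq_natDegree hsep
      (SplittingField.splits (X ^ (p ^ ((m : ℕ) * s)) - X : F[X]))
    rw [h1]
    exact FiniteField.X_pow_card_pow_sub_X_natDegree_eq F hmn0 (Fact.out : p.Prime).one_lt
  have hrootuniv : (X ^ (p ^ ((m : ℕ) * s)) - X : F[X]).rootSet K = Set.univ := by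
    rw [Set.eq_univ_iff_forall]
    intro x
    rw [mem_rootSet_of_ne hgpne, map_sub, map_pow, aeval_X, hxQ, sub_self]
  have h2 : Fintype.card ((X ^ (p ^ ((m : ℕ) * s)) - X : F[X]).rootSet K) =
      Fintype.card K :=
    Fintype.card_congr ((Equiv.setCongr hrootuniv).trans (Equiv.Set.univ K))
  have h3 : Fintype.card K = Fintype.card F ^ s :=
    h2.symm.trans (hcardroot.trans hQpow.symm)
  convert h3

theorem stmt_15 (F : Type) [Field F] [Fintype F] (n : ℕ) (hn : 2 ≤ n)
    (r : ℕ) (hr : 1 < r) (hrq : r < Fintype.card F)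
    (hrchar : ∃ k : ℕ, r = (ringChar F) ^ k)
    (σ : F ≃+* F) (hσ : ∀ a : F, σ a = a ^ r)
    (hgcd : 1 < Nat.gcd (((Fintype.card F) ^ (n + 1) - 1) / ((Fintype.card F) - 1)) (r - 1)) :
    ∃ M : Matrix (Fin (n + 1)) (Fin (n + 1)) F, IsUnit M ∧
      ∀ ξ : Fin (n + 1) → F, ξ ≠ 0 → ∀ l : F, ξ ᵥ* M ≠ l • (fun i => σ (ξ i)) := by
  classical
  have hp' : (ringChar F).Prime := CharP.char_is_prime F (ringChar F)
  haveI : Fact (ringChar F).Prime := ⟨hp'⟩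
  obtain ⟨k, hk⟩ := hrchar
  have hq2 : 1 < Fintype.card F := Fintype.one_lt_card
  obtain ⟨K, _i1, _i2, _i3, hcardK⟩ :=
    stmt_15_aux F (ringChar F) (n + 1) (Nat.succ_ne_zero n)
  set q := Fintype.card F with hq
  set Q := q ^ (n + 1) with hQdef
  have hQ2 : 1 < Q := Nat.one_lt_pow (Nat.succ_ne_zero n) hq2
  haveI : Finite K := Finite.of_fintype K
  haveI : Module.Finite F K := Module.Finite.of_finite
  haveI : CharP K (ringChar F) :=
    charP_of_injective_algebraMap (algebraMap F K).injective (ringChar F)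
  -- the basis
  have hfr : Module.finrank F K = n + 1 := by
    have h1 := Module.card_fintype (Module.finBasis F K)
    rw [hcardK, Fintype.card_fin, ← hq] at h1
    exact (Nat.pow_right_injective hq2 h1.symm)
  set bb : Module.Basis (Fin (n + 1)) F K := (Module.finBasis F K).reindex (finCongr hfr) with hbb
  -- Frobenius and its inverse
  set Φ : K →+* K := iterateFrobenius K (ringChar F) k with hΦdef
  have hΦ : ∀ x : K, Φ x = x ^ r := fun x => by
    rw [hΦdef, iterateFrobenius_def, ← hk]
  have hΦbij : Function.Bijective ⇑Φ := Finite.injective_iff_bijective.mp Φ.injective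
  set ψ : K → K := ⇑(Equiv.ofBijective ⇑Φ hΦbij).symm with hψdef
  have hψ : ∀ x : K, (ψ x) ^ r = x := fun x => by
    rw [← hΦ]
    exact (Equiv.ofBijective ⇑Φ hΦbij).apply_symm_apply x
  -- the generator
  obtain ⟨ζ, hζ⟩ := IsCyclic.exists_generator (α := Kˣ)
  set N := Q - 1 with hNdef
  have hordζ : orderOf ζ = N := by
    have h01 : orderOf ζ = Nat.card Kˣ := orderOf_eq_card_of_forall_mem_zpowers hζ
    rw [Nat.card_eq_fintype_card] at h01
    have h02 : Nat.card Kˣ = Nat.card K - 1 := Nat.card_units K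
    simp only [Nat.card_eq_fintype_card] at h02
    rw [h01, h02, hcardK]
  -- arithmetic
  set d := (Q - 1) / (q - 1) with hddef
  set c := Nat.gcd d (r - 1) with hcdef
  have hc1 : 1 < c := hgcd
  have hqdvd : (q - 1) ∣ N := by
    have := Nat.sub_dvd_pow_sub_pow q 1 (n + 1)
    rwa [one_pow] at this
  have hdN : d * (q - 1) = N := Nat.div_mul_cancel hqdvd
  have hcd : c ∣ d := Nat.gcd_dvd_left _ _
  have hcr : c ∣ r - 1 := Nat.gcd_dvd_right _ _
  set e := (q - 1) * (d / c) with hedef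
  have hec : e * c = N := by
    rw [hedef, mul_assoc, Nat.div_mul_cancel hcd, mul_comm, hdN]
  have hN1 : 1 ≤ N := by omega
  have he1 : 1 ≤ e := by
    rcases Nat.eq_zero_or_pos e with h | h
    · rw [h, zero_mul] at hec; omega
    · exact h
  have heN : e < N := by
    calc e < e * c := by nlinarith
    _ = N := hec
  -- the matrix
  set t : Fin (n + 1) → K := fun i => ψ (bb i) with htdef
  set g : K := (ζ : K) with hgdef
  have hg0 : g ≠ 0 := Units.ne_zero ζ
  set M : Matrix (Fin (n + 1)) (Fin (n + 1)) F :=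
    Matrix.of (fun i j => bb.equivFun (g * t i) j) with hMdef
  -- key computation 1
  have key1 : ∀ ξ : Fin (n + 1) → F,
      ξ ᵥ* M = bb.equivFun (g * ∑ i, ξ i • t i) := by
    intro ξ
    funext j
    have h0 : g * ∑ i, ξ i • t i = ∑ i, ξ i • (g * t i) := by
      rw [Finset.mul_sum]
      exact Finset.sum_congr rfl fun i _ => (mul_smul_comm _ _ _)
    rw [h0, map_sum]
    simp only [Matrix.vecMul, dotProduct, hMdef, Matrix.of_apply,
      Finset.sum_apply, _root_.map_smul, Pi.smul_apply, smul_eq_mul]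
  -- key computation 2
  have key2 : ∀ ξ : Fin (n + 1) → F,
      (∑ i, ξ i • t i) ^ r = bb.equivFun.symm (fun i => σ (ξ i)) := by
    intro ξ
    rw [Module.Basis.equivFun_symm_apply, ← hΦ, map_sum]
    refine Finset.sum_congr rfl fun i _ => ?_
    have htr : t i ^ r = bb i := hψ (bb i)
    rw [Algebra.smul_def, _root_.map_mul, hΦ, hΦ, htr, ← _root_.map_pow, ← hσ]
    rw [← Algebra.smul_def]
  -- the core lemma
  have core : ∀ (ξ : Fin (n + 1) → F) (l : F),
      ξ ᵥ* M = l • (fun i => σ (ξ i)) → ξ = 0 := by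
    intro ξ l hEq
    by_contra hξ
    set u : K := ∑ i, ξ i • t i with hudef
    set w : K := bb.equivFun.symm (fun i => σ (ξ i)) with hwdef
    have hur : u ^ r = w := key2 ξ
    have heq2 : g * u = l • w := by
      have h1 : bb.equivFun (g * u) = l • (fun i => σ (ξ i)) := by
        rw [← key1 ξ, hEq]
      have h2 := congrArg bb.equivFun.symm h1
      rwa [LinearEquiv.symm_apply_apply, _root_.map_smul] at h2
    have hσξ : (fun i => σ (ξ i)) ≠ (0 : Fin (n + 1) → F) := by
      intro h0
      apply hξ
      funext i
      have h3 := congrFun h0 i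
      simp only [Pi.zero_apply] at h3
      have := σ.injective (by simpa using h3)
      simpa using this
    have hw0 : w ≠ 0 := by
      rw [hwdef]
      intro h0
      apply hσξ
      have := bb.equivFun.symm.injective (a₁ := fun i => σ (ξ i)) (a₂ := 0)
      simp only [map_zero] at this
      exact this h0
    have hu0 : u ≠ 0 := by
      intro h0
      apply hw0
      rw [← hur, h0, zero_pow (by omega : r ≠ 0)]
    have hl0 : l ≠ 0 := by
      rintro rfl
      rw [zero_smul] at heq2
      exact (mul_ne_zero hg0 hu0) heq2
    have hgeq : g = algebraMap F K l * u ^ (r - 1) := by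
      have h3 : g * u = algebraMap F K l * (u ^ (r - 1) * u) := by
        rw [← pow_succ, Nat.sub_add_cancel (le_of_lt hr), heq2, ← hur,
          Algebra.smul_def]
      rw [← mul_assoc] at h3
      exact mul_right_cancel₀ hu0 h3
    have hle : (algebraMap F K l) ^ e = 1 := by
      have h4 : l ^ (q - 1) = 1 := FiniteField.pow_card_sub_one_eq_one l hl0
      rw [hedef, pow_mul, ← _root_.map_pow, h4, _root_.map_one, one_pow]
    have huN : u ^ N = 1 := by
      rw [hNdef, ← hcardK]
      exact FiniteField.pow_card_sub_one_eq_one u hu0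
    have hue : (u ^ (r - 1)) ^ e = 1 := by
      have hrc : (r - 1) / c * c = r - 1 := Nat.div_mul_cancel hcr
      have h5 : (r - 1) * e = N * ((r - 1) / c) := by
        calc (r - 1) * e = ((r - 1) / c * c) * e := by rw [hrc]
        _ = (e * c) * ((r - 1) / c) := by ring
        _ = N * ((r - 1) / c) := by rw [hec]
      rw [← pow_mul, h5, pow_mul, huN, one_pow]
    have hge : g ^ e = 1 := by
      rw [hgeq, mul_pow, hle, hue, mul_one]
    have hζe : ζ ^ e = 1 := by
      ext
      rw [Units.val_pow_eq_pow_val, ← hgdef, hge, Units.val_one]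
    have hNe : N ∣ e := hordζ ▸ orderOf_dvd_of_pow_eq_one hζe
    have := Nat.le_of_dvd (by omega) hNe
    omega
  refine ⟨M, ?_, ?_⟩
  · rw [← Matrix.vecMul_injective_iff_isUnit]
    intro ξ η h
    have h' : ξ ᵥ* M = η ᵥ* M := h
    have h0 : (ξ - η) ᵥ* M = (0 : F) • (fun i => σ ((ξ - η) i)) := by
      rw [Matrix.sub_vecMul, h', sub_self, zero_smul]
    have := core (ξ - η) 0 h0
    exact sub_eq_zero.mp this
  · intro ξ hξ l hEq
    exact hξ (core ξ l hEq)
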